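/- Let (Ω, Pr) be a probability space, let W be a finite index set, and let (A_w)_{w∈W} be events such that Pr[A_w] = s for every w ∈ W and Pr[A_w ∩ A_{w'}] = s² for all distinct w, w' ∈ W (pairwise independence). Then the probability that exactly one of the events A_w occurs is at least |W| · s · (1 − (|W|−1)·s). -/

import Mathlib

open MeasureTheory ProbabilityTheory Finset
open scoped ProbabilityTheory

/-- If `(A_w)_{w ∈ W}` are events each of probability `s`, and
pairwise independent (`Pr[A_w ∩ A_w'] = s²` for `w ≠ w'`), then the
probability that exactly one of the events occurs is at least
`|W| · s · (1 − (|W|−1)·s)`. -/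
theorem stmt7 {Ω : Type*} [MeasureSpace Ω] [IsProbabilityMeasure (ℙ : Measure Ω)]
    {ι : Type*} (W : Finset ι) (A : ι → Set Ω)
    (hmeas : ∀ w ∈ W, MeasurableSet (A w)) (s : ℝ)
    (hs : ∀ w ∈ W, (ℙ (A w)).toReal = s)
    (hpair : ∀ w ∈ W, ∀ w' ∈ W, w ≠ w' → (ℙ (A w ∩ A w')).toReal = s ^ 2) :
    (W.card : ℝ) * s * (1 - ((W.card : ℝ) - 1) * s) ≤
      (ℙ {ω | ∃! w, w ∈ W ∧ ω ∈ A w}).toReal := by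
  classical
  set n : ℝ := (W.card : ℝ) with hn
  set B : ι → Set Ω := fun w => A w \ ⋃ w' ∈ W.erase w, A w' with hB
  have hBmeas : ∀ w ∈ W, MeasurableSet (B w) := by
    intro w hw
    exact (hmeas w hw).diff (MeasurableSet.biUnion (W.erase w).countable_toSet
      fun w' hw' => hmeas w' (mem_of_mem_erase hw'))
  have hdisj : (W : Set ι).PairwiseDisjoint B := by
    intro w hw w' hw' hne
    simp only [Function.onFun]
    rw [Set.disjoint_left]
    intro ω hω hω'
    exact hω.2 (Set.mem_iUnion₂.mpr ⟨w', Finset.mem_erase.mpr ⟨hne.symm, hw'⟩, hω'.1⟩)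
  have hset : {ω | ∃! w, w ∈ W ∧ ω ∈ A w} = ⋃ w ∈ W, B w := by
    ext ω
    constructor
    · rintro ⟨w, ⟨hw, hωw⟩, huniq⟩
      refine Set.mem_iUnion₂.mpr ⟨w, hw, hωw, ?_⟩
      intro h
      obtain ⟨w', hw', hmem⟩ := Set.mem_iUnion₂.mp h
      exact (Finset.mem_erase.mp hw').1 (huniq w' ⟨Finset.mem_of_mem_erase hw', hmem⟩)
    · intro h
      obtain ⟨w, hw, hωw, hnot⟩ := Set.mem_iUnion₂.mp h
      refine ⟨w, ⟨hw, hωw⟩, ?_⟩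
      rintro w' ⟨hw', hωw'⟩
      by_contra hne
      exact hnot (Set.mem_iUnion₂.mpr ⟨w', Finset.mem_erase.mpr ⟨hne, hw'⟩, hωw'⟩)
  have hlow : ∀ w ∈ W, s - (n - 1) * s ^ 2 ≤ (ℙ (B w)).toReal := by
    intro w hw
    have hsub : A w ⊆ B w ∪ ⋃ w' ∈ W.erase w, (A w ∩ A w') := by
      intro ω hω
      by_cases h : ω ∈ ⋃ w' ∈ W.erase w, A w'
      · obtain ⟨w', hw', hmem⟩ := Set.mem_iUnion₂.mp h
        exact Or.inr (Set.mem_iUnion₂.mpr ⟨w', hw', hω, hmem⟩)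
      · exact Or.inl ⟨hω, h⟩
    have h1 : ℙ (A w) ≤ ℙ (B w) + ∑ w' ∈ W.erase w, ℙ (A w ∩ A w') :=
      le_trans (measure_mono hsub) (le_trans (measure_union_le _ _)
        (add_le_add le_rfl (measure_biUnion_finset_le _ _)))
    have htop : ℙ (B w) + ∑ w' ∈ W.erase w, ℙ (A w ∩ A w') ≠ ⊤ :=
      ENNReal.add_ne_top.mpr ⟨measure_ne_top _ _,
        (ENNReal.sum_lt_top.mpr fun _ _ => measure_lt_top _ _).ne⟩
    have h2 : s ≤ (ℙ (B w)).toReal + ∑ w' ∈ W.erase w, (ℙ (A w ∩ A w')).toReal := by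
      rw [← hs w hw]
      calc (ℙ (A w)).toReal
          ≤ (ℙ (B w) + ∑ w' ∈ W.erase w, ℙ (A w ∩ A w')).toReal :=
            ENNReal.toReal_mono htop h1
        _ = (ℙ (B w)).toReal + ∑ w' ∈ W.erase w, (ℙ (A w ∩ A w')).toReal := by
            rw [ENNReal.toReal_add (measure_ne_top _ _)
              (ENNReal.sum_lt_top.mpr fun _ _ => measure_lt_top _ _).ne,
              ENNReal.toReal_sum fun _ _ => measure_ne_top _ _]
    have hsum : ∑ w' ∈ W.erase w, (ℙ (A w ∩ A w')).toReal = (n - 1) * s ^ 2 := by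
      rw [Finset.sum_congr rfl fun w' hw' =>
        hpair w hw w' (Finset.mem_of_mem_erase hw') (Ne.symm (Finset.mem_erase.mp hw').1)]
      rw [Finset.sum_const, Finset.card_erase_of_mem hw, nsmul_eq_mul]
      have : (1 : ℕ) ≤ W.card := Finset.card_pos.mpr ⟨w, hw⟩
      rw [Nat.cast_sub this]
      norm_num [hn]
    linarith [h2, hsum.symm.le, hsum.le]
  calc n * s * (1 - (n - 1) * s)
      = ∑ _w ∈ W, (s - (n - 1) * s ^ 2) := by
        rw [Finset.sum_const, nsmul_eq_mul, ← hn]; ring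
    _ ≤ ∑ w ∈ W, (ℙ (B w)).toReal := Finset.sum_le_sum hlow
    _ = (∑ w ∈ W, ℙ (B w)).toReal :=
        (ENNReal.toReal_sum fun _ _ => measure_ne_top _ _).symm
    _ = (ℙ (⋃ w ∈ W, B w)).toReal := by
        rw [measure_biUnion_finset hdisj hBmeas]
    _ = (ℙ {ω | ∃! w, w ∈ W ∧ ω ∈ A w}).toReal := by rw [hset]
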